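/- Let K be an odd positive integer, ε > 0, m > 0 a real number, and let γ : {0,…,K} → [0,1] satisfy γ(l) = γ(K−l) for all l, γ(l) ≥ γ(l+1) for all 0 ≤ l ≤ (K−1)/2, γ(l) ≤ γ(l+1) for all (K+1)/2 ≤ l ≤ K−1, γ((K−1)/2) > 0, and γ((K+1)/2) > 0. Define f(p, p'; γ) = Σ_{l=0}^{(K−1)/2} ( e^{mε} b(l;K,p') − b(l;K,p) ) γ(l) + Σ_{l=(K+1)/2}^{K} ( b(l;K,p) − e^{mε} b(l;K,p') ) γ(l) on F(ε,0). Then every maximizer (p*, p'*) of f over F(ε,0) — i.e., every (p*, p'*) ∈ F(ε,0) such that f(p*, p'*; γ) ≥ f(p, p'; γ) for all (p, p') ∈ F(ε,0) — satisfies p* = e^{ε} p'* or 1 − p'* = e^{ε} (1 − p*). -/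

import Mathlib

open Finset

/-- Binomial(K,p) probability mass at `l`. -/
noncomputable def binomPMF (K : ℕ) (p : ℝ) (l : ℕ) : ℝ :=
  (K.choose l : ℝ) * p ^ l * (1 - p) ^ (K - l)

/-- The feasible region `F(ε,0)`: pairs `(p,p') ∈ [0,1]²` consistent with pure
`ε`-differential privacy. -/
def Feas0 (ε p p' : ℝ) : Prop :=
  0 ≤ p ∧ p ≤ 1 ∧ 0 ≤ p' ∧ p' ≤ 1 ∧
  p ≤ Real.exp ε * p' ∧ p' ≤ Real.exp ε * p ∧
  1 - p ≤ Real.exp ε * (1 - p') ∧ 1 - p' ≤ Real.exp ε * (1 - p)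

/-- The i.i.d. privacy cost objective `f(p, p'; γ)`. -/
noncomputable def privCostIID (K : ℕ) (m ε : ℝ) (γ : ℕ → ℝ) (p p' : ℝ) : ℝ :=
  (∑ l ∈ Finset.range ((K + 1) / 2),
      (Real.exp (m * ε) * binomPMF K p' l - binomPMF K p l) * γ l)
  + ∑ l ∈ Finset.Icc ((K + 1) / 2) K,
      (binomPMF K p l - Real.exp (m * ε) * binomPMF K p' l) * γ l

lemma term_hasDerivAt (K l : ℕ) (p : ℝ) (c : ℝ) :
    HasDerivAt (fun x => c * binomPMF K x l)
      (c * ((K.choose l : ℝ) * ((l:ℝ) * p^(l-1) * (1-p)^(K-l))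
         - (K.choose l : ℝ) * (((K-l : ℕ):ℝ) * p^l * (1-p)^(K-l-1)))) p := by
  have h1 : HasDerivAt (fun x : ℝ => (K.choose l : ℝ) * x ^ l)
      ((K.choose l : ℝ) * ((l:ℝ) * p^(l-1))) p := (hasDerivAt_pow l p).const_mul _
  have h2 : HasDerivAt (fun x : ℝ => (1 - x) ^ (K - l))
      (-(((K-l : ℕ):ℝ) * (1-p)^(K-l-1))) p := by
    have := (hasDerivAt_pow (K-l) (1-p)).comp p
      (((hasDerivAt_id p).const_sub 1))
    exact this.congr_deriv (by ring)
  have h3 := (h1.mul h2).const_mul c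
  simp only [binomPMF, mul_assoc]
  refine (h3.congr_deriv (by ring)).congr_of_eventuallyEq (Filter.Eventually.of_forall fun x => ?_)
  simp only [Pi.mul_apply]; ring

lemma sum_hasDerivAt (K : ℕ) (hK : 0 < K) (c : ℕ → ℝ) (p : ℝ) :
    HasDerivAt (fun x => ∑ l ∈ range (K+1), c l * binomPMF K x l)
      ((K:ℝ) * ∑ j ∈ range K, (c (j+1) - c j) * binomPMF (K-1) p j) p := by
  have hD := HasDerivAt.fun_sum (u := range (K+1))
    (fun l _ => term_hasDerivAt K l p (c l))
  refine hD.congr_deriv ?_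
  symm
  have claim1 : ∑ l ∈ range (K+1),
      c l * ((K.choose l : ℝ) * ((l:ℝ) * p^(l-1) * (1-p)^(K-l)))
      = ∑ j ∈ range K, c (j+1) * ((K:ℝ) * binomPMF (K-1) p j) := by
    rw [Finset.sum_range_succ']
    simp only [Nat.cast_zero, zero_mul, mul_zero, add_zero]
    apply Finset.sum_congr rfl
    intro j hj
    have hcast : ((K.choose (j+1) : ℕ) : ℝ) * ((j+1 : ℕ) : ℝ) = (K:ℝ) * ((K-1).choose j : ℝ) := by
      rw [← Nat.cast_mul, ← Nat.cast_mul]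
      congr 1
      have := Nat.add_one_mul_choose_eq (K-1) j
      rw [Nat.sub_add_cancel hK] at this
      simpa using this.symm
    have he : K - (j+1) = (K-1) - j := by omega
    have he2 : (j+1) - 1 = j := by omega
    rw [binomPMF, he, he2]
    push_cast at hcast ⊢
    linear_combination (c (j+1) * p^j * (1-p)^(K-1-j)) * hcast
  have claim2 : ∑ l ∈ range (K+1),
      c l * ((K.choose l : ℝ) * (((K-l:ℕ):ℝ) * p^l * (1-p)^(K-l-1)))
      = ∑ j ∈ range K, c j * ((K:ℝ) * binomPMF (K-1) p j) := by
    rw [Finset.sum_range_succ]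
    simp only [Nat.sub_self, Nat.cast_zero, zero_mul, mul_zero, add_zero]
    apply Finset.sum_congr rfl
    intro l hl
    have hl' : l < K := Finset.mem_range.mp hl
    have hcast : ((K.choose l : ℕ) : ℝ) * (((K-l:ℕ)) : ℝ) = (K:ℝ) * ((K-1).choose l : ℝ) := by
      rw [← Nat.cast_mul, ← Nat.cast_mul]
      congr 1
      have h1 := Nat.choose_succ_right_eq K l
      have h2 := Nat.add_one_mul_choose_eq (K-1) l
      rw [Nat.sub_add_cancel hK] at h2
      omega
    have he : K - l - 1 = (K-1) - l := by omega
    rw [binomPMF, he]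
    linear_combination (c l * p^l * (1-p)^((K-1)-l)) * hcast
  rw [Finset.mul_sum]
  have : ∀ l ∈ range (K+1), c l * ((K.choose l : ℝ) * ((l:ℝ) * p^(l-1) * (1-p)^(K-l))
         - (K.choose l : ℝ) * (((K-l : ℕ):ℝ) * p^l * (1-p)^(K-l-1)))
      = c l * ((K.choose l : ℝ) * ((l:ℝ) * p^(l-1) * (1-p)^(K-l)))
        - c l * ((K.choose l : ℝ) * (((K-l:ℕ):ℝ) * p^l * (1-p)^(K-l-1))) := by
    intro l _; ring
  rw [Finset.sum_congr rfl this, Finset.sum_sub_distrib, claim1, claim2,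
    ← Finset.sum_sub_distrib]
  apply Finset.sum_congr rfl
  intro j _
  ring

lemma binomPMF_pos (n : ℕ) (p : ℝ) (hp : 0 < p) (hp1 : p < 1) (j : ℕ) (hj : j ≤ n) :
    0 < binomPMF n p j := by
  unfold binomPMF
  have hC : (0:ℝ) < n.choose j := by exact_mod_cast Nat.choose_pos hj
  exact mul_pos (mul_pos hC (pow_pos hp j)) (pow_pos (by linarith) _)

lemma S_strictMonoOn (K : ℕ) (hK : 0 < K) (c : ℕ → ℝ)
    (hnn : ∀ j < K, 0 ≤ c (j+1) - c j)
    (j0 : ℕ) (hj0 : j0 < K) (hpos : 0 < c (j0+1) - c j0) :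
    StrictMonoOn (fun x => ∑ l ∈ range (K+1), c l * binomPMF K x l) (Set.Icc (0:ℝ) 1) := by
  apply strictMonoOn_of_deriv_pos (convex_Icc 0 1)
  · exact fun x _ => (sum_hasDerivAt K hK c x).differentiableAt.continuousAt.continuousWithinAt
  · intro x hx
    rw [interior_Icc] at hx
    rw [(sum_hasDerivAt K hK c x).deriv]
    apply mul_pos (by exact_mod_cast hK)
    apply Finset.sum_pos'
    · intro j hj
      have hj' : j < K := Finset.mem_range.mp hj
      exact mul_nonneg (hnn j hj')
        (le_of_lt (binomPMF_pos (K-1) x hx.1 hx.2 j (by omega)))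
    · exact ⟨j0, Finset.mem_range.mpr hj0,
        mul_pos hpos (binomPMF_pos (K-1) x hx.1 hx.2 j0 (by omega))⟩

lemma decomp (K : ℕ) (m ε : ℝ) (γ : ℕ → ℝ) (p p' : ℝ) :
    privCostIID K m ε γ p p' =
      (∑ l ∈ range ((K+1)/2), Real.exp (m*ε) * binomPMF K p' l * γ l
       - ∑ l ∈ Finset.Icc ((K+1)/2) K, Real.exp (m*ε) * binomPMF K p' l * γ l)
      + ∑ l ∈ range (K+1), (if l < (K+1)/2 then -γ l else γ l) * binomPMF K p l := by
  set n := (K+1)/2 with hn_def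
  have hn : n ≤ K + 1 := by omega
  have hIcc : Finset.Icc n K = Finset.Ico n (K+1) := by rw [Finset.Ico_add_one_right_eq_Icc]
  unfold privCostIID
  rw [hIcc, range_eq_Ico, range_eq_Ico, ← Finset.sum_Ico_consecutive
    (fun l => (if l < n then -γ l else γ l) * binomPMF K p l) (Nat.zero_le n) hn]
  have h1 : ∑ l ∈ Finset.Ico 0 n, (if l < n then -γ l else γ l) * binomPMF K p l
      = ∑ l ∈ Finset.Ico 0 n, -(binomPMF K p l * γ l) :=
    Finset.sum_congr rfl (fun l hl => by rw [if_pos (Finset.mem_Ico.mp hl).2]; ring)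
  have h2 : ∑ l ∈ Finset.Ico n (K+1), (if l < n then -γ l else γ l) * binomPMF K p l
      = ∑ l ∈ Finset.Ico n (K+1), binomPMF K p l * γ l :=
    Finset.sum_congr rfl (fun l hl => by
      rw [if_neg (by exact Nat.not_lt.mpr (Finset.mem_Ico.mp hl).1)]; ring)
  rw [h1, h2]
  have A : ∀ (f g : ℕ → ℝ) (s : Finset ℕ),
      ∑ l ∈ s, (f l - g l) * γ l = ∑ l ∈ s, f l * γ l - ∑ l ∈ s, g l * γ l := by
    intro f g s
    rw [← Finset.sum_sub_distrib]
    exact Finset.sum_congr rfl fun l _ => by ring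
  rw [A (fun l => Real.exp (m*ε) * binomPMF K p' l) (fun l => binomPMF K p l),
      A (fun l => binomPMF K p l) (fun l => Real.exp (m*ε) * binomPMF K p' l),
      Finset.sum_neg_distrib]
  ring

/-- characterization of the worst-case probabilities: for a
symmetric, monotone noise function `γ` with strictly positive middle values,
every maximizer of the i.i.d. privacy cost objective over `F(ε,0)` lies on the
boundary `p* = e^ε p'*` or `1 − p'* = e^ε (1 − p*)`. -/
theorem statement18 (K : ℕ) (hK : Odd K) (hKpos : 0 < K)
    (ε m : ℝ) (hε : 0 < ε) (hm : 0 < m)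
    (γ : ℕ → ℝ) (hγ01 : ∀ l ≤ K, 0 ≤ γ l ∧ γ l ≤ 1)
    (hsym : ∀ l ≤ K, γ l = γ (K - l))
    (hmono1 : ∀ l ≤ (K - 1) / 2, γ (l + 1) ≤ γ l)
    (hmono2 : ∀ l, (K + 1) / 2 ≤ l → l ≤ K - 1 → γ l ≤ γ (l + 1))
    (hpos1 : 0 < γ ((K - 1) / 2)) (hpos2 : 0 < γ ((K + 1) / 2))
    (pstar p'star : ℝ) (hfeas : Feas0 ε pstar p'star)
    (hmax : ∀ p p' : ℝ, Feas0 ε p p' →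
      privCostIID K m ε γ p p' ≤ privCostIID K m ε γ pstar p'star) :
    pstar = Real.exp ε * p'star ∨ 1 - p'star = Real.exp ε * (1 - pstar) := by
  obtain ⟨t, ht⟩ : ∃ t, K = 2*t + 1 := by
    obtain ⟨t, ht⟩ := hK; exact ⟨t, by omega⟩
  have hn2 : (K+1)/2 = t+1 := by omega
  have ht2 : (K-1)/2 = t := by omega
  obtain ⟨h0p, hp1, h0p', hp'1, hA, hB, hC, hD⟩ := hfeas
  set E := Real.exp ε with hE_def
  have hE0 : 0 < E := Real.exp_pos ε
  -- define c
  set c : ℕ → ℝ := fun l => if l < (K+1)/2 then -γ l else γ l with hc_def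
  -- trivial boundary cases
  rcases eq_or_lt_of_le h0p with hP0 | hP0
  · left
    have hp'0 : p'star ≤ 0 := by rw [← hP0] at hB; simpa using hB
    have : p'star = 0 := le_antisymm hp'0 h0p'
    rw [this, ← hP0]; ring
  rcases eq_or_lt_of_le hp1 with hP1 | hP1
  · right
    have : 1 - p'star ≤ 0 := by rw [hP1] at hD; simpa using hD
    have hp'1' : p'star = 1 := le_antisymm hp'1 (by linarith)
    rw [hp'1', ← hP1]; ring
  · by_contra hcon
    push_neg at hcon
    obtain ⟨hne1, hne2⟩ := hcon
    have hAs : pstar < E * p'star := lt_of_le_of_ne hA hne1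
    have hDs : 1 - p'star < E * (1 - pstar) := lt_of_le_of_ne hD hne2
    -- perturbation
    set δ : ℝ := min (min ((1-pstar)/2) (E * p'star - pstar))
      ((E*(1-pstar) - (1-p'star))/E) with hδ_def
    have hδ0 : 0 < δ := by
      apply lt_min (lt_min (by linarith) (by linarith))
      apply div_pos (by linarith) hE0
    set q : ℝ := pstar + δ with hq_def
    have hq1 : q ≤ 1 := by
      have : δ ≤ (1-pstar)/2 := le_trans (min_le_left _ _) (min_le_left _ _)
      simp only [hq_def]; linarith
    have hq0 : 0 ≤ q := by simp only [hq_def]; linarith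
    have hfeasq : Feas0 ε q p'star := by
      refine ⟨hq0, hq1, h0p', hp'1, ?_, ?_, ?_, ?_⟩
      · have : δ ≤ E * p'star - pstar := le_trans (min_le_left _ _) (min_le_right _ _)
        simp only [hq_def, ← hE_def]; linarith
      · have : E * pstar ≤ E * q := by
          apply mul_le_mul_of_nonneg_left _ (le_of_lt hE0)
          simp only [hq_def]; linarith
        rw [← hE_def]; linarith
      · have h1 : 1 - q ≤ 1 - pstar := by simp only [hq_def]; linarith
        rw [← hE_def]; linarith
      · have hδ3 : δ ≤ (E*(1-pstar) - (1-p'star))/E := min_le_right _ _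
        have : E * δ ≤ E*(1-pstar) - (1-p'star) := by
          have h4 := (le_div_iff₀ hE0).mp hδ3
          linarith [h4, mul_comm δ E]
        have hEq : E * (1 - q) = E * (1-pstar) - E * δ := by
          simp only [hq_def]; ring
        rw [← hE_def, hEq]; linarith
    -- strict monotonicity gives contradiction
    have hnn : ∀ j < K, 0 ≤ c (j+1) - c j := by
      intro j hj
      simp only [hc_def, hn2]
      by_cases h1 : j + 1 < t + 1
      · rw [if_pos h1, if_pos (by omega)]
        have := hmono1 j (by omega)
        linarith
      · rw [if_neg h1]
        by_cases h2 : j < t + 1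
        · rw [if_pos h2]
          have hj' : j = t := by omega
          have g1 := (hγ01 j (by omega)).1
          have g2 := (hγ01 (j+1) (by omega)).1
          linarith
        · rw [if_neg h2]
          have := hmono2 j (by omega) (by omega)
          linarith
    have hposd : 0 < c (t+1) - c t := by
      simp only [hc_def, hn2]
      rw [if_neg (by omega), if_pos (by omega)]
      rw [ht2] at hpos1; rw [hn2] at hpos2
      linarith
    have hmono := S_strictMonoOn K hKpos c hnn t (by omega) hposd
    have hlt : (∑ l ∈ range (K+1), c l * binomPMF K pstar l)
        < ∑ l ∈ range (K+1), c l * binomPMF K q l := by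
      have := hmono (Set.mem_Icc.mpr ⟨h0p, hp1⟩) (Set.mem_Icc.mpr ⟨hq0, hq1⟩)
        (by simp only [hq_def]; linarith)
      simpa using this
    have hle := hmax q p'star hfeasq
    rw [decomp K m ε γ q p'star, decomp K m ε γ pstar p'star] at hle
    simp only [hc_def] at hlt
    linarith
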